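/- For the maximally entangled state P_+ in C^d ⊗ C^d and any density matrix σ on C^d ⊗ C^d with Schmidt number at most n, if t ≥ 0 is such that P_+ + tσ (after normalization) has Schmidt number at most n, then t ≥ (d−n)/n. In particular the generalised Schmidt-n robustness of P_+ is at least (d−n)/n. -/

import Mathlib

open scoped BigOperators ComplexConjugate ComplexOrder

noncomputable section

/-- The maximally entangled unit vector `ψ₊ = (1/√d) ∑ i, e i ⊗ e i`. -/
def maxEnt (d : ℕ) : Fin d × Fin d → ℂ :=
  fun p => if p.1 = p.2 then ((1 / Real.sqrt d : ℝ) : ℂ) else 0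

/-- The projection `P₊ = |ψ₊⟩⟨ψ₊|`. -/
def Pplus (d : ℕ) : Matrix (Fin d × Fin d) (Fin d × Fin d) ℂ :=
  fun p q => maxEnt d p * conj (maxEnt d q)

/-- A vector of `ℂ^d ⊗ ℂ^d` has Schmidt rank at most `n`. -/
def SchmidtRankLE (d n : ℕ) (ψ : Fin d × Fin d → ℂ) : Prop :=
  ∃ a b : Fin n → Fin d → ℂ, ∀ p, ψ p = ∑ i, a i p.1 * b i p.2

/-- A positive operator has Schmidt number at most `n` if it is a nonnegative
combination of pure states of Schmidt rank at most `n`. -/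
def SchmidtNumberLE (d n : ℕ) (ρ : Matrix (Fin d × Fin d) (Fin d × Fin d) ℂ) : Prop :=
  ∃ (m : ℕ) (c : Fin m → ℝ) (ψ : Fin m → Fin d × Fin d → ℂ),
    (∀ t, 0 ≤ c t) ∧ (∀ t, SchmidtRankLE d n (ψ t)) ∧
    ∀ p q, ρ p q = ∑ t, (c t : ℂ) * (ψ t p * conj (ψ t q))

private lemma esum_apply {d : ℕ} {ι : Type*} (s : Finset ι) (f : ι → EuclideanSpace ℂ (Fin d))
    (p : Fin d) : (∑ i ∈ s, f i) p = ∑ i ∈ s, f i p := by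
  induction s using Finset.cons_induction with
  | empty => simp
  | cons a s ha ih => simp [Finset.sum_cons, ih]

private lemma einner_eq {d : ℕ} (x y : EuclideanSpace ℂ (Fin d)) :
    inner (𝕜 := ℂ) x y = ∑ p : Fin d, conj (x p) * y p := by
  simp [PiLp.inner_apply, RCLike.inner_apply]
  exact Finset.sum_congr rfl fun _ _ => mul_comm _ _

private lemma ortho_decomp {d n : ℕ} (ψ : Fin d × Fin d → ℂ) (h : SchmidtRankLE d n ψ) :
    ∃ g c : Fin n → Fin d → ℂ,
      (∀ j k, j ≠ k → ∑ p : Fin d, conj (g j p) * g k p = 0) ∧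
      (∀ p q, ψ (p, q) = ∑ j, c j q * g j p) := by
  classical
  obtain ⟨a, b, hab⟩ := h
  let A : Fin n → EuclideanSpace ℂ (Fin d) := fun i => WithLp.toLp 2 (a i : Fin d → ℂ)
  let G : Fin n → EuclideanSpace ℂ (Fin d) := @InnerProductSpace.gramSchmidt ℂ _ _ _ _ (Fin n) _ _ (inferInstance : WellFoundedLT (Fin n)) A
  have horthG : ∀ j k, j ≠ k → inner (𝕜 := ℂ) (G j) (G k) = 0 := fun j k hjk =>
    @InnerProductSpace.gramSchmidt_orthogonal ℂ _ _ _ _ (Fin n) _ _ (inferInstance : WellFoundedLT (Fin n)) A _ _ hjk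
  have hexp : ∀ v ∈ Submodule.span ℂ (Set.range G), ∀ p : Fin d,
      v p = ∑ j, (inner (𝕜 := ℂ) (G j) v / inner (𝕜 := ℂ) (G j) (G j)) * G j p := by
    intro v hv
    induction hv using Submodule.span_induction with
    | mem x hx =>
      obtain ⟨k, rfl⟩ := hx
      intro p
      rw [Finset.sum_eq_single k]
      · by_cases hk : inner (𝕜 := ℂ) (G k) (G k) = 0
        · have hGk : G k = 0 := inner_self_eq_zero.mp hk
          rw [hGk]
          simp
        · rw [div_self hk, one_mul]
      · intro j _ hj
        rw [horthG j k hj, zero_div, zero_mul]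
      · simp
    | zero => intro p; simp
    | add x y hx hy ihx ihy =>
      intro p
      have hxyp : (x + y : EuclideanSpace ℂ (Fin d)) p = x p + y p := rfl
      rw [hxyp, ihx p, ihy p, ← Finset.sum_add_distrib]
      refine Finset.sum_congr rfl fun j _ => ?_
      rw [inner_add_right, add_div, add_mul]
    | smul z x hx ihx =>
      intro p
      have hzp : (z • x : EuclideanSpace ℂ (Fin d)) p = z * x p := rfl
      rw [hzp, ihx p, Finset.mul_sum]
      refine Finset.sum_congr rfl fun j _ => ?_
      rw [inner_smul_right, mul_div_assoc]
      ring
  have hmem : ∀ q : Fin d, (WithLp.toLp 2 (fun p => ψ (p, q)) : EuclideanSpace ℂ (Fin d))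
      ∈ Submodule.span ℂ (Set.range G) := by
    intro q
    rw [@InnerProductSpace.span_gramSchmidt ℂ _ _ _ _ (Fin n) _ _ (inferInstance : WellFoundedLT (Fin n)) A]
    have : (WithLp.toLp 2 (fun p => ψ (p, q)) : EuclideanSpace ℂ (Fin d)) = ∑ i : Fin n, b i q • A i := by
      ext p
      show ψ (p, q) = _
      rw [hab (p, q), esum_apply]
      exact Finset.sum_congr rfl fun i _ => mul_comm _ _
    rw [this]
    exact Submodule.sum_mem _ fun i _ =>
      Submodule.smul_mem _ _ (Submodule.subset_span ⟨i, rfl⟩)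
  refine ⟨fun j p => G j p,
    fun j q => inner (𝕜 := ℂ) (G j) (WithLp.toLp 2 (fun p => ψ (p, q)) : EuclideanSpace ℂ (Fin d))
      / inner (𝕜 := ℂ) (G j) (G j), ?_, ?_⟩
  · intro j k hjk
    rw [← einner_eq (G j) (G k)]
    exact horthG j k hjk
  · intro p q
    exact hexp _ (hmem q) p

private lemma trace_sq_le {d n : ℕ} (g c : Fin n → Fin d → ℂ)
    (horth : ∀ j k, j ≠ k → ∑ p : Fin d, conj (g j p) * g k p = 0)
    (ψ : Fin d × Fin d → ℂ) (hrep : ∀ p q, ψ (p, q) = ∑ j, c j q * g j p) :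
    Complex.normSq (∑ k : Fin d, ψ (k, k)) ≤ n * ∑ p : Fin d × Fin d, Complex.normSq (ψ p) := by
  classical
  set ν : Fin n → ℝ := fun j => ∑ p : Fin d, Complex.normSq (g j p) with hν
  have hν0 : ∀ j, 0 ≤ ν j := fun j => Finset.sum_nonneg fun p _ => Complex.normSq_nonneg _
  have hgg : ∀ j, ∑ p : Fin d, conj (g j p) * g j p = (ν j : ℂ) := by
    intro j
    rw [hν]
    push_cast
    exact Finset.sum_congr rfl fun p _ => by rw [mul_comm, Complex.mul_conj]
  set t : Fin n → ℂ := fun j => ∑ k : Fin d, c j k * g j k with hT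
  have htr : ∑ k : Fin d, ψ (k, k) = ∑ j, t j := by
    simp_rw [hrep]
    rw [Finset.sum_comm]
  have hA : Complex.normSq (∑ j, t j) ≤ (n : ℝ) * ∑ j, Complex.normSq (t j) := by
    rw [Complex.normSq_eq_norm_sq]
    calc ‖∑ j, t j‖ ^ 2 ≤ (∑ j, ‖t j‖) ^ 2 := by
          have h1 := norm_sum_le Finset.univ t
          exact pow_le_pow_left₀ (norm_nonneg _) h1 2
      _ ≤ ((Finset.univ : Finset (Fin n)).card : ℝ) * ∑ j, ‖t j‖ ^ 2 :=
          sq_sum_le_card_mul_sum_sq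
      _ = (n : ℝ) * ∑ j, Complex.normSq (t j) := by
          simp [Complex.sq_norm]
  have hB : ∀ j, Complex.normSq (t j) ≤ (∑ k : Fin d, Complex.normSq (c j k)) * ν j := by
    intro j
    rw [Complex.normSq_eq_norm_sq]
    calc ‖t j‖ ^ 2 ≤ (∑ k : Fin d, ‖c j k‖ * ‖g j k‖) ^ 2 := by
          refine pow_le_pow_left₀ (norm_nonneg _) ?_ 2
          refine le_trans (norm_sum_le _ _) (le_of_eq ?_)
          exact Finset.sum_congr rfl fun k _ => norm_mul _ _
      _ ≤ (∑ k : Fin d, ‖c j k‖ ^ 2) * ∑ k : Fin d, ‖g j k‖ ^ 2 :=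
          Finset.sum_mul_sq_le_sq_mul_sq _ _ _
      _ = (∑ k : Fin d, Complex.normSq (c j k)) * ν j := by
          simp [Complex.sq_norm, hν]
  have hC : ∑ p : Fin d × Fin d, Complex.normSq (ψ p)
      = ∑ j, (∑ q : Fin d, Complex.normSq (c j q)) * ν j := by
    have key : ((∑ p : Fin d × Fin d, Complex.normSq (ψ p) : ℝ) : ℂ)
        = ((∑ j, (∑ q : Fin d, Complex.normSq (c j q)) * ν j : ℝ) : ℂ) := by
      push_cast
      calc ∑ p : Fin d × Fin d, (Complex.normSq (ψ p) : ℂ)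
          = ∑ p : Fin d, ∑ q : Fin d, (Complex.normSq (ψ (p, q)) : ℂ) := by
            rw [Fintype.sum_prod_type]
        _ = ∑ q : Fin d, ∑ p : Fin d, conj (ψ (p, q)) * ψ (p, q) := by
            rw [Finset.sum_comm]
            exact Finset.sum_congr rfl fun q _ => Finset.sum_congr rfl fun p _ => by
              rw [mul_comm, Complex.mul_conj]
        _ = ∑ q : Fin d, ∑ j, ∑ j', (conj (c j q) * c j' q) * ∑ p : Fin d, conj (g j p) * g j' p := by
            refine Finset.sum_congr rfl fun q _ => ?_
            calc ∑ p : Fin d, conj (ψ (p, q)) * ψ (p, q)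
                = ∑ p : Fin d, ∑ j, ∑ j', (conj (c j q) * c j' q) * (conj (g j p) * g j' p) := by
                  refine Finset.sum_congr rfl fun p _ => ?_
                  rw [hrep p q, map_sum, Finset.sum_mul]
                  refine Finset.sum_congr rfl fun j _ => ?_
                  rw [map_mul, Finset.mul_sum]
                  exact Finset.sum_congr rfl fun j' _ => by ring
              _ = ∑ j, ∑ j', (conj (c j q) * c j' q) * ∑ p : Fin d, conj (g j p) * g j' p := by
                  rw [Finset.sum_comm]
                  refine Finset.sum_congr rfl fun j _ => ?_
                  rw [Finset.sum_comm]
                  exact Finset.sum_congr rfl fun j' _ => (Finset.mul_sum _ _ _).symm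
        _ = ∑ q : Fin d, ∑ j, (Complex.normSq (c j q) : ℂ) * (ν j : ℂ) := by
            refine Finset.sum_congr rfl fun q _ => Finset.sum_congr rfl fun j _ => ?_
            rw [Finset.sum_eq_single j]
            · rw [hgg j, mul_comm (conj (c j q)) (c j q), Complex.mul_conj]
            · intro j' _ hj'
              rw [horth j j' (Ne.symm hj'), mul_zero]
            · simp
        _ = ∑ j, (∑ q : Fin d, (Complex.normSq (c j q) : ℂ)) * (ν j : ℂ) := by
            rw [Finset.sum_comm]
            exact Finset.sum_congr rfl fun j _ => by rw [Finset.sum_mul]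
    exact_mod_cast key
  rw [htr, hC]
  refine le_trans hA ?_
  refine mul_le_mul_of_nonneg_left ?_ (by positivity)
  exact Finset.sum_le_sum fun j _ => hB j

private lemma rank_trace_bound {d n : ℕ} (ψ : Fin d × Fin d → ℂ) (h : SchmidtRankLE d n ψ) :
    Complex.normSq (∑ k : Fin d, ψ (k, k)) ≤ n * ∑ p : Fin d × Fin d, Complex.normSq (ψ p) := by
  obtain ⟨g, c, horth, hrep⟩ := ortho_decomp ψ h
  exact trace_sq_le g c horth ψ hrep

/-- Lower bound for the generalised Schmidt-`n` robustness of the maximally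
entangled state: if `σ` is a density matrix of Schmidt number at most `n`,
`t ≥ 0`, and `P₊ + t σ` (up to normalization) has Schmidt number at most `n`,
then `t ≥ (d − n)/n`. -/
theorem generalised_schmidt_robustness_lower_bound (d n : ℕ) (hd : 0 < d) (hn : 0 < n)
    (σ : Matrix (Fin d × Fin d) (Fin d × Fin d) ℂ)
    (hσ : σ.PosSemidef) (hσtr : σ.trace = 1) (hσn : SchmidtNumberLE d n σ)
    (t : ℝ) (ht : 0 ≤ t)
    (h : SchmidtNumberLE d n (Pplus d + (t : ℂ) • σ)) :
    ((d : ℝ) - n) / n ≤ t := by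
  classical
  obtain ⟨M, cc, φ, hcc, hrank, hρ⟩ := h
  have hdR : (0 : ℝ) < d := by exact_mod_cast hd
  have hnR : (0 : ℝ) < n := by exact_mod_cast hn
  have hdC : ((d : ℝ) : ℂ) ≠ 0 := by exact_mod_cast ne_of_gt hdR
  set ρ : Matrix (Fin d × Fin d) (Fin d × Fin d) ℂ := Pplus d + (t : ℂ) • σ with hρdef
  set T : Fin M → ℂ := fun s => ∑ k : Fin d, φ s (k, k) with hTdef
  set N : Fin M → ℝ := fun s => ∑ p : Fin d × Fin d, Complex.normSq (φ s p) with hNdef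
  set Q : ℂ := ∑ j : Fin d, ∑ k : Fin d, σ (j, j) (k, k) with hQdef
  -- Q is a nonnegative real
  have hQpos : 0 ≤ Q := by
    have h1 := (Matrix.posSemidef_iff_dotProduct_mulVec.mp hσ).2 (fun p : Fin d × Fin d => if p.1 = p.2 then (1 : ℂ) else 0)
    have h2 : dotProduct
        (star (fun p : Fin d × Fin d => if p.1 = p.2 then (1 : ℂ) else 0))
        (σ.mulVec (fun p => if p.1 = p.2 then 1 else 0)) = Q := by
      rw [hQdef]
      simp [dotProduct, Matrix.mulVec, Fintype.sum_prod_type, apply_ite, mul_ite, ite_mul,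
        Finset.sum_ite_eq, Finset.sum_ite_eq']
    rwa [h2] at h1
  have hQre : 0 ≤ Q.re := by simpa using (Complex.le_def.mp hQpos).1
  have hQeq : Q = (Q.re : ℂ) := by
    have him : Q.im = 0 := by simpa using (Complex.le_def.mp hQpos).2.symm
    exact Complex.ext (by simp) (by simp [him])
  -- entanglement fidelity of ρ, computed from the decomposition
  have hS1a : ∑ j : Fin d, ∑ k : Fin d, ρ (j, j) (k, k)
      = ∑ s, (cc s : ℂ) * ((Complex.normSq (T s) : ℝ) : ℂ) := by
    calc ∑ j : Fin d, ∑ k : Fin d, ρ (j, j) (k, k)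
        = ∑ j : Fin d, ∑ k : Fin d, ∑ s, (cc s : ℂ) * (φ s (j, j) * conj (φ s (k, k))) :=
          Finset.sum_congr rfl fun j _ => Finset.sum_congr rfl fun k _ => hρ (j, j) (k, k)
      _ = ∑ j : Fin d, ∑ s, ∑ k : Fin d, (cc s : ℂ) * (φ s (j, j) * conj (φ s (k, k))) :=
          Finset.sum_congr rfl fun j _ => Finset.sum_comm
      _ = ∑ s, ∑ j : Fin d, ∑ k : Fin d, (cc s : ℂ) * (φ s (j, j) * conj (φ s (k, k))) :=
          Finset.sum_comm
      _ = ∑ s, (cc s : ℂ) * ((Complex.normSq (T s) : ℝ) : ℂ) := by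
          refine Finset.sum_congr rfl fun s _ => ?_
          rw [← Complex.mul_conj (T s), hTdef]
          simp only [map_sum]
          rw [Finset.sum_mul_sum]
          rw [Finset.mul_sum]
          exact Finset.sum_congr rfl fun j _ => by rw [Finset.mul_sum]
  -- entanglement fidelity of ρ, computed from the definition
  have hPsum : ∑ j : Fin d, ∑ k : Fin d, Pplus d (j, j) (k, k) = (d : ℂ) := by
    have hval : ∀ j k : Fin d, Pplus d (j, j) (k, k) = ((d : ℝ)⁻¹ : ℝ) := by
      intro j k
      have e1 : maxEnt d (j, j) = ((1 / Real.sqrt d : ℝ) : ℂ) := if_pos rfl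
      have e2 : maxEnt d (k, k) = ((1 / Real.sqrt d : ℝ) : ℂ) := if_pos rfl
      rw [Pplus, e1, e2, Complex.conj_ofReal, ← Complex.ofReal_mul]
      congr 1
      rw [div_mul_div_comm, one_mul, Real.mul_self_sqrt (Nat.cast_nonneg d), one_div]
    simp only [hval]
    rw [Finset.sum_const, Finset.sum_const]
    simp only [Finset.card_univ, Fintype.card_fin, nsmul_eq_mul]
    rw [← Complex.ofReal_natCast d]
    rw [show ((d:ℝ):ℂ) * (((d:ℝ):ℂ) * (((d:ℝ)⁻¹ : ℝ) : ℂ)) = ((d:ℝ):ℂ) * ((((d:ℝ)):ℂ) * (((d:ℝ)):ℂ)⁻¹) by push_cast; ring]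
    rw [mul_inv_cancel₀ hdC, mul_one]
  have hS1b : ∑ j : Fin d, ∑ k : Fin d, ρ (j, j) (k, k) = (d : ℂ) + (t : ℂ) * Q := by
    have : ∀ j k : Fin d, ρ (j, j) (k, k) = Pplus d (j, j) (k, k) + (t : ℂ) * σ (j, j) (k, k) := by
      intro j k
      rw [hρdef]
      simp [Matrix.add_apply]
    simp only [this]
    rw [show (∑ j : Fin d, ∑ k : Fin d, (Pplus d (j, j) (k, k) + (t : ℂ) * σ (j, j) (k, k)))
      = (∑ j : Fin d, ∑ k : Fin d, Pplus d (j, j) (k, k))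
        + (t : ℂ) * ∑ j : Fin d, ∑ k : Fin d, σ (j, j) (k, k) by
        rw [Finset.mul_sum, ← Finset.sum_add_distrib]
        exact Finset.sum_congr rfl fun j _ => by
          rw [Finset.mul_sum, ← Finset.sum_add_distrib]]
    rw [hPsum, ← hQdef]
  -- trace of ρ, two ways
  have htra : ρ.trace = ∑ s, (cc s : ℂ) * ((N s : ℝ) : ℂ) := by
    rw [Matrix.trace]
    calc ∑ p : Fin d × Fin d, ρ.diag p
        = ∑ p : Fin d × Fin d, ∑ s, (cc s : ℂ) * (φ s p * conj (φ s p)) :=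
          Finset.sum_congr rfl fun p _ => hρ p p
      _ = ∑ s, ∑ p : Fin d × Fin d, (cc s : ℂ) * (φ s p * conj (φ s p)) := Finset.sum_comm
      _ = ∑ s, (cc s : ℂ) * ((N s : ℝ) : ℂ) := by
          refine Finset.sum_congr rfl fun s _ => ?_
          rw [hNdef]
          push_cast
          rw [Finset.mul_sum]
          exact Finset.sum_congr rfl fun p _ => by rw [Complex.mul_conj]
  have hPtr : (Pplus d).trace = 1 := by
    rw [Matrix.trace]
    have hdiag : ∀ p : Fin d × Fin d, (Pplus d).diag p
        = if p.1 = p.2 then (((d : ℝ)⁻¹ : ℝ) : ℂ) else 0 := by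
      intro p
      rw [Matrix.diag]
      by_cases hp : p.1 = p.2
      · rw [Pplus, show maxEnt d p = ((1 / Real.sqrt d : ℝ) : ℂ) from if_pos hp,
          Complex.conj_ofReal, ← Complex.ofReal_mul, if_pos hp]
        congr 1
        rw [div_mul_div_comm, one_mul, Real.mul_self_sqrt (Nat.cast_nonneg d), one_div]
      · rw [Pplus, show maxEnt d p = 0 from if_neg hp, zero_mul, if_neg hp]
    simp only [hdiag]
    rw [Fintype.sum_prod_type]
    simp only [Finset.sum_ite_eq, Finset.mem_univ, if_true]
    rw [Finset.sum_const]
    simp only [Finset.card_univ, Fintype.card_fin, nsmul_eq_mul]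
    push_cast
    field_simp
  have htrb : ρ.trace = 1 + (t : ℂ) := by
    rw [hρdef, Matrix.trace_add, Matrix.trace_smul, hPtr, hσtr, smul_eq_mul, mul_one]
  -- put things together over ℝ
  set L : ℝ := ∑ s, cc s * Complex.normSq (T s) with hLdef
  set R : ℝ := ∑ s, cc s * N s with hRdef
  have hL : L = (d : ℝ) + t * Q.re := by
    have h0 : ((L : ℝ) : ℂ) = (d : ℂ) + (t : ℂ) * Q := by
      rw [hLdef]
      push_cast
      rw [← hS1a, hS1b]
    rw [hQeq] at h0
    exact_mod_cast h0
  have hR : R = 1 + t := by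
    have h0 : ((R : ℝ) : ℂ) = 1 + (t : ℂ) := by
      rw [hRdef]
      push_cast
      rw [← htra, htrb]
    exact_mod_cast h0
  have hLR : L ≤ (n : ℝ) * R := by
    rw [hLdef, hRdef, Finset.mul_sum]
    refine Finset.sum_le_sum fun s _ => ?_
    have hb := rank_trace_bound (φ s) (hrank s)
    calc cc s * Complex.normSq (T s) ≤ cc s * ((n : ℝ) * N s) := by
          refine mul_le_mul_of_nonneg_left ?_ (hcc s)
          exact hb
      _ = (n : ℝ) * (cc s * N s) := by ring
  have hfinal : (d : ℝ) ≤ (n : ℝ) * (1 + t) := by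
    have h1 : (d : ℝ) ≤ L := by
      rw [hL]
      nlinarith
    rw [← hR]
    exact le_trans h1 hLR
  rw [div_le_iff₀ hnR]
  nlinarith
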